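/- Every interior solution trajectory of the rate-adjusted replicator dynamics in a congestion model with strictly increasing C¹ latencies converges, as t → ∞, to a single Wardrop equilibrium (not merely to the set of Wardrop equilibria). In particular, if the network is irreducible, every interior orbit converges to the unique Wardrop equilibrium. -/

import Mathlib

open Filter Real Set Topology

set_option linter.unusedSectionVars false

namespace Stmt13Aux

variable {ι : Type*} [Fintype ι] {A : ι → Type*} [∀ i, Fintype (A i)]
  {E : Type*} [Fintype E] [DecidableEq E]

/-- Edge load induced by a flow vector. -/
def Ld (inc : (Σ i, A i) → Finset E) (y : (Σ i, A i) → ℝ) (r : E) : ℝ :=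
  ∑ a : Σ i, A i, if r ∈ inc a then y a else 0

/-- Route cost. -/
def cst (inc : (Σ i, A i) → Finset E) (φ : E → ℝ → ℝ) (y : (Σ i, A i) → ℝ)
    (a : Σ i, A i) : ℝ :=
  ∑ r ∈ inc a, φ r (Ld inc y r)

/-- Relative entropy Lyapunov function. -/
noncomputable def ent (lam : ι → ℝ) (p y : (Σ i, A i) → ℝ) : ℝ :=
  ∑ a : Σ i, A i, (lam a.1)⁻¹ * (p a * (Real.log (p a) - Real.log (y a)))

/-- The entropy-derivative functional. -/
def GF (inc : (Σ i, A i) → Finset E) (φ : E → ℝ → ℝ) (p y : (Σ i, A i) → ℝ) : ℝ :=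
  ∑ a : Σ i, A i, (p a - y a) * cst inc φ y a

lemma Ld_continuous (inc : (Σ i, A i) → Finset E) (r : E) :
    Continuous fun y : (Σ i, A i) → ℝ => Ld inc y r := by
  apply continuous_finset_sum
  intro a _
  by_cases h : r ∈ inc a
  · simpa [h] using continuous_apply a
  · simp [h]; exact continuous_const

lemma Ld_sub (inc : (Σ i, A i) → Finset E) (p y : (Σ i, A i) → ℝ) (r : E) :
    Ld inc (fun a => p a - y a) r = Ld inc p r - Ld inc y r := by
  unfold Ld
  rw [← Finset.sum_sub_distrib]
  refine Finset.sum_congr rfl fun a _ => ?_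
  by_cases h : r ∈ inc a <;> simp [h]

lemma sum_mul_cst (inc : (Σ i, A i) → Finset E) (φ : E → ℝ → ℝ)
    (y z : (Σ i, A i) → ℝ) :
    ∑ a : Σ i, A i, z a * cst inc φ y a = ∑ r : E, Ld inc z r * φ r (Ld inc y r) := by
  unfold cst
  calc ∑ a : Σ i, A i, z a * ∑ r ∈ inc a, φ r (Ld inc y r)
      = ∑ a : Σ i, A i, ∑ r : E, (if r ∈ inc a then z a * φ r (Ld inc y r) else 0) := by
        refine Finset.sum_congr rfl fun a _ => ?_
        rw [Finset.mul_sum, Finset.sum_ite_mem, Finset.univ_inter]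
    _ = ∑ r : E, ∑ a : Σ i, A i, (if r ∈ inc a then z a else 0) * φ r (Ld inc y r) := by
        rw [Finset.sum_comm]
        exact Finset.sum_congr rfl fun r _ => Finset.sum_congr rfl fun a _ => by
          rw [ite_mul, zero_mul]
    _ = _ := by
        refine Finset.sum_congr rfl fun r _ => ?_
        rw [Ld]
        exact (Finset.sum_mul _ _ _).symm

/-- `GF` in edge form. -/
lemma GF_eq_edge (inc : (Σ i, A i) → Finset E) (φ : E → ℝ → ℝ) (p y : (Σ i, A i) → ℝ) :
    GF inc φ p y = ∑ r : E, (Ld inc p r - Ld inc y r) * φ r (Ld inc y r) := by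
  rw [GF, sum_mul_cst inc φ y (fun a => p a - y a)]
  exact Finset.sum_congr rfl fun r _ => by rw [Ld_sub]

lemma gibbs_term {lam p y : ℝ} (hl : 0 < lam) (hp : 0 ≤ p) (hy : 0 < y) :
    lam⁻¹ * (p - y) ≤ lam⁻¹ * (p * (Real.log p - Real.log y)) := by
  have hli : 0 < lam⁻¹ := inv_pos.2 hl
  rcases eq_or_lt_of_le hp with h | h
  · rw [← h]; simp; positivity
  · have h1 : Real.log (y / p) ≤ y / p - 1 := Real.log_le_sub_one_of_pos (div_pos hy h)
    rw [Real.log_div hy.ne' h.ne'] at h1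
    have h2 : p - y ≤ p * (Real.log p - Real.log y) := by
      have h3 := mul_le_mul_of_nonneg_left h1 h.le
      have h4 : p * (y / p) = y := by field_simp
      nlinarith
    exact mul_le_mul_of_nonneg_left h2 hli.le

lemma gibbs_eq {p y : ℝ} (hp : 0 < p) (hy : 0 < y)
    (h : p * (Real.log p - Real.log y) = p - y) : y = p := by
  by_contra hne
  have h1 : y / p ≠ 1 := by
    intro hc; exact hne (by field_simp at hc; linarith)
  have h2 : Real.log (y / p) < y / p - 1 := Real.log_lt_sub_one_of_pos (div_pos hy hp) h1
  rw [Real.log_div hy.ne' hp.ne'] at h2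
  have h3 := mul_lt_mul_of_pos_left h2 hp
  have h4 : p * (y / p) = y := by field_simp
  nlinarith

lemma deriv_nonneg_of_right_min {g : ℝ → ℝ} {c δ : ℝ} (hδ : 0 < δ)
    (hg : HasDerivAt g c 0) (hmin : ∀ ε ∈ Set.Ioc 0 δ, g 0 ≤ g ε) : 0 ≤ c := by
  have h1 : HasDerivWithinAt g c (Set.Ioi 0) 0 := hg.hasDerivWithinAt
  rw [hasDerivWithinAt_iff_tendsto_slope] at h1
  have hsd : Set.Ioi (0:ℝ) \ {0} = Set.Ioi 0 := by
    apply Set.diff_singleton_eq_self; simp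
  rw [hsd] at h1
  refine ge_of_tendsto h1 ?_
  have hmem : Set.Iio δ ∈ 𝓝[>] (0:ℝ) :=
    nhdsWithin_le_nhds (Iio_mem_nhds hδ)
  filter_upwards [hmem, self_mem_nhdsWithin] with z hz1 hz2
  have hz : z ∈ Set.Ioc 0 δ := ⟨hz2, le_of_lt hz1⟩
  have hz0 := hmin z hz
  rw [slope_def_field]
  apply div_nonneg (by linarith) (by linarith [hz.1])


/-- The flow polytope. -/
def Dst (ρ : ι → ℝ) : Set ((Σ i, A i) → ℝ) :=
  {y | (∀ a, 0 ≤ y a) ∧ ∀ i, ∑ α : A i, y ⟨i, α⟩ = ρ i}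

lemma mem_Dst {ρ : ι → ℝ} {y : (Σ i, A i) → ℝ} :
    y ∈ Dst ρ ↔ (∀ a, 0 ≤ y a) ∧ ∀ i, ∑ α : A i, y ⟨i, α⟩ = ρ i := Iff.rfl

/-- Wardrop equilibrium, in concrete form. -/
def Wd (ρ : ι → ℝ) (inc : (Σ i, A i) → Finset E) (φ : E → ℝ → ℝ)
    (q : (Σ i, A i) → ℝ) : Prop :=
  q ∈ Dst ρ ∧ ∀ i, ∀ α β : A i, 0 < q ⟨i, α⟩ →
    cst inc φ q ⟨i, α⟩ ≤ cst inc φ q ⟨i, β⟩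

lemma mono_term_nonpos {f : ℝ → ℝ} (hf : StrictMono f) (u v : ℝ) :
    (u - v) * (f v - f u) ≤ 0 := by
  rcases lt_trichotomy u v with h | h | h
  · have := hf h; nlinarith
  · simp [h]
  · have := hf h; nlinarith

lemma mono_term_eq {f : ℝ → ℝ} (hf : StrictMono f) {u v : ℝ}
    (h : 0 ≤ (u - v) * (f v - f u)) : u = v := by
  rcases lt_trichotomy u v with hlt | he | hgt
  · have := hf hlt; nlinarith
  · exact he
  · have := hf hgt; nlinarith

section WardTheory

variable {ρ : ι → ℝ} {inc : (Σ i, A i) → Finset E} {φ : E → ℝ → ℝ}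
  {q q' p y : (Σ i, A i) → ℝ}

/-- (E1): against a Wardrop point, costs paired with any feasible flow are minimal. -/
lemma sum_sub_mul_cst_nonpos (hA : ∀ i, Nonempty (A i))
    (hq : Wd ρ inc φ q) (hy : y ∈ Dst ρ) :
    ∑ a : Σ i, A i, (q a - y a) * cst inc φ q a ≤ 0 := by
  rw [← Finset.univ_sigma_univ, Finset.sum_sigma]
  apply Finset.sum_nonpos
  intro i _
  have : (A i) → True := fun _ => trivial
  obtain ⟨β₀, -, hβ₀⟩ := Finset.exists_min_image Finset.univ
    (fun β : A i => cst inc φ q ⟨i, β⟩)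
    ⟨(hA i).some, Finset.mem_univ _⟩
  have hqc : ∀ α : A i, q ⟨i, α⟩ * cst inc φ q ⟨i, α⟩
      = q ⟨i, α⟩ * cst inc φ q ⟨i, β₀⟩ := by
    intro α
    rcases eq_or_lt_of_le (hq.1.1 ⟨i, α⟩) with h | h
    · rw [← h]; ring
    · rw [le_antisymm (hq.2 i α β₀ h) (hβ₀ α (Finset.mem_univ _))]
  have h1 : ∑ α : A i, q ⟨i, α⟩ * cst inc φ q ⟨i, α⟩ = ρ i * cst inc φ q ⟨i, β₀⟩ := by
    rw [Finset.sum_congr rfl fun α _ => hqc α, ← Finset.sum_mul, hq.1.2 i]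
  have h2 : ρ i * cst inc φ q ⟨i, β₀⟩ ≤ ∑ α : A i, y ⟨i, α⟩ * cst inc φ q ⟨i, α⟩ := by
    rw [← hy.2 i, Finset.sum_mul]
    exact Finset.sum_le_sum fun α _ =>
      mul_le_mul_of_nonneg_left (hβ₀ α (Finset.mem_univ _)) (hy.1 ⟨i, α⟩)
  have h3 : ∑ α : A i, (q ⟨i, α⟩ - y ⟨i, α⟩) * cst inc φ q ⟨i, α⟩
      = (∑ α : A i, q ⟨i, α⟩ * cst inc φ q ⟨i, α⟩)
        - ∑ α : A i, y ⟨i, α⟩ * cst inc φ q ⟨i, α⟩ := by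
    rw [← Finset.sum_sub_distrib]
    exact Finset.sum_congr rfl fun α _ => by ring
  rw [h3, h1]
  linarith

/-- GF is bounded by the pairing against costs at `p`. -/
lemma GF_le (hmono : ∀ r, StrictMono (φ r)) (p y : (Σ i, A i) → ℝ) :
    GF inc φ p y ≤ ∑ a : Σ i, A i, (p a - y a) * cst inc φ p a := by
  have hswap : ∑ a : Σ i, A i, (p a - y a) * cst inc φ p a
      = ∑ r : E, (Ld inc p r - Ld inc y r) * φ r (Ld inc p r) := by
    rw [sum_mul_cst inc φ p (fun a => p a - y a)]
    exact Finset.sum_congr rfl fun r _ => by rw [Ld_sub]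
  rw [GF_eq_edge, hswap]
  apply Finset.sum_le_sum
  intro r _
  have := mono_term_nonpos (hmono r) (Ld inc p r) (Ld inc y r)
  nlinarith [this]

lemma GF_nonpos (hA : ∀ i, Nonempty (A i)) (hmono : ∀ r, StrictMono (φ r))
    (hq : Wd ρ inc φ q) (hy : y ∈ Dst ρ) : GF inc φ q y ≤ 0 :=
  (GF_le hmono q y).trans (sum_sub_mul_cst_nonpos hA hq hy)

/-- If `GF q y = 0` then loads agree. -/
lemma loads_eq_of_GF_zero (hA : ∀ i, Nonempty (A i)) (hmono : ∀ r, StrictMono (φ r))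
    (hq : Wd ρ inc φ q) (hy : y ∈ Dst ρ) (h0 : GF inc φ q y = 0) :
    ∀ r, Ld inc y r = Ld inc q r := by
  have hB : ∑ r : E, (Ld inc q r - Ld inc y r) * (φ r (Ld inc y r) - φ r (Ld inc q r)) ≤ 0 :=
    Finset.sum_nonpos fun r _ => mono_term_nonpos (hmono r) _ _
  have hsplit : GF inc φ q y
      = (∑ a : Σ i, A i, (q a - y a) * cst inc φ q a)
        + ∑ r : E, (Ld inc q r - Ld inc y r) * (φ r (Ld inc y r) - φ r (Ld inc q r)) := by
    rw [GF_eq_edge]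
    have hswap : ∑ a : Σ i, A i, (q a - y a) * cst inc φ q a
        = ∑ r : E, (Ld inc q r - Ld inc y r) * φ r (Ld inc q r) := by
      rw [sum_mul_cst inc φ q (fun a => q a - y a)]
      exact Finset.sum_congr rfl fun r _ => by rw [Ld_sub]
    rw [hswap, ← Finset.sum_add_distrib]
    exact Finset.sum_congr rfl fun r _ => by ring
  have hA1 := sum_sub_mul_cst_nonpos hA hq hy
  have hBzero : ∑ r : E, (Ld inc q r - Ld inc y r) * (φ r (Ld inc y r) - φ r (Ld inc q r)) = 0 := by
    linarith [hsplit ▸ h0]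
  intro r
  have hterm : ∀ r' ∈ Finset.univ (α := E),
      (Ld inc q r' - Ld inc y r') * (φ r' (Ld inc y r') - φ r' (Ld inc q r')) ≤ 0 :=
    fun r' _ => mono_term_nonpos (hmono r') _ _
  have := (Finset.sum_eq_zero_iff_of_nonpos hterm).1 hBzero r (Finset.mem_univ r)
  exact (mono_term_eq (hmono r) (le_of_eq this.symm)).symm

lemma cst_congr (hL : ∀ r, Ld inc p r = Ld inc q r) (a : Σ i, A i) :
    cst inc φ p a = cst inc φ q a :=
  Finset.sum_congr rfl fun r _ => by rw [hL r]

/-- (K6): a feasible point with the same loads as a Wardrop point is Wardrop. -/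
lemma Wd_of_loads (hA : ∀ i, Nonempty (A i)) (hq : Wd ρ inc φ q) (hp : p ∈ Dst ρ)
    (hL : ∀ r, Ld inc p r = Ld inc q r) : Wd ρ inc φ p := by
  classical
  -- per-commodity minimum cost
  have hmin : ∀ i : ι, ∃ β₀ : A i, ∀ β : A i, cst inc φ q ⟨i, β₀⟩ ≤ cst inc φ q ⟨i, β⟩ := by
    intro i
    obtain ⟨β₀, -, hβ₀⟩ := Finset.exists_min_image Finset.univ
      (fun β : A i => cst inc φ q ⟨i, β⟩) ⟨(hA i).some, Finset.mem_univ _⟩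
    exact ⟨β₀, fun β => hβ₀ β (Finset.mem_univ _)⟩
  choose m hm using hmin
  -- q-cost pairing equals ρ i * min
  have hqc : ∀ i, ∑ α : A i, q ⟨i, α⟩ * cst inc φ q ⟨i, α⟩ = ρ i * cst inc φ q ⟨i, m i⟩ := by
    intro i
    rw [← hq.1.2 i, Finset.sum_mul]
    refine Finset.sum_congr rfl fun α _ => ?_
    rcases eq_or_lt_of_le (hq.1.1 ⟨i, α⟩) with h | h
    · rw [← h]; ring
    · rw [le_antisymm (hq.2 i α (m i) h) (hm i α)]
  -- total pairing of p against cst q equals that of q (since loads agree)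
  have htot : ∑ a : Σ i, A i, (p a - q a) * cst inc φ q a = 0 := by
    rw [sum_mul_cst inc φ q (fun a => p a - q a)]
    apply Finset.sum_eq_zero
    intro r _
    rw [Ld_sub, hL r, sub_self, zero_mul]
  -- each commodity excess is nonneg and they sum to zero
  set s : ι → ℝ := fun i => ∑ α : A i, p ⟨i, α⟩ * (cst inc φ q ⟨i, α⟩ - cst inc φ q ⟨i, m i⟩)
    with hs
  have hsnn : ∀ i, ∀ α : A i, 0 ≤ p ⟨i, α⟩ * (cst inc φ q ⟨i, α⟩ - cst inc φ q ⟨i, m i⟩) :=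
    fun i α => mul_nonneg (hp.1 ⟨i, α⟩) (by linarith [hm i α])
  have hssum : ∑ i : ι, s i = 0 := by
    have h1 : ∑ i : ι, s i = ∑ a : Σ i, A i, (p a - q a) * cst inc φ q a := by
      rw [← Finset.univ_sigma_univ, Finset.sum_sigma]
      refine Finset.sum_congr rfl fun i _ => ?_
      have hps : ∑ α : A i, p ⟨i, α⟩ * cst inc φ q ⟨i, m i⟩ = ρ i * cst inc φ q ⟨i, m i⟩ := by
        rw [← Finset.sum_mul, hp.2 i]
      have : s i = (∑ α : A i, p ⟨i, α⟩ * cst inc φ q ⟨i, α⟩) - ρ i * cst inc φ q ⟨i, m i⟩ := by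
        rw [hs]
        simp only []
        rw [← hps, ← Finset.sum_sub_distrib]
        exact Finset.sum_congr rfl fun α _ => by ring
      rw [this, ← hqc i, ← Finset.sum_sub_distrib]
      exact Finset.sum_congr rfl fun α _ => by ring
    rw [h1, htot]
  have hszero : ∀ i, s i = 0 := by
    have := (Finset.sum_eq_zero_iff_of_nonneg
      (fun i _ => Finset.sum_nonneg fun α _ => hsnn i α)).1 hssum
    exact fun i => this i (Finset.mem_univ i)
  -- each used route of p has minimal q-cost
  have hkey : ∀ i, ∀ α : A i, 0 < p ⟨i, α⟩ → cst inc φ q ⟨i, α⟩ = cst inc φ q ⟨i, m i⟩ := by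
    intro i α hpos
    have := (Finset.sum_eq_zero_iff_of_nonneg (fun α _ => hsnn i α)).1 (hszero i) α
      (Finset.mem_univ α)
    rcases mul_eq_zero.1 this with h | h
    · exact absurd h hpos.ne'
    · linarith
  refine ⟨hp, fun i α β hpos => ?_⟩
  rw [cst_congr hL, cst_congr hL, hkey i α hpos]
  exact hm i β

/-- Uniqueness of loads among Wardrop points. -/
lemma loads_eq_of_Wd (hA : ∀ i, Nonempty (A i)) (hmono : ∀ r, StrictMono (φ r))
    (hq : Wd ρ inc φ q) (hq' : Wd ρ inc φ q') :
    ∀ r, Ld inc q' r = Ld inc q r := by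
  have hA1 := sum_sub_mul_cst_nonpos hA hq' hq.1
  have hA2 := sum_sub_mul_cst_nonpos hA hq hq'.1
  have hS : ∑ r : E, (Ld inc q' r - Ld inc q r) * (φ r (Ld inc q' r) - φ r (Ld inc q r))
      = (∑ a : Σ i, A i, (q' a - q a) * cst inc φ q' a)
        + ∑ a : Σ i, A i, (q a - q' a) * cst inc φ q a := by
    rw [sum_mul_cst inc φ q' (fun a => q' a - q a), sum_mul_cst inc φ q (fun a => q a - q' a),
      ← Finset.sum_add_distrib]
    refine Finset.sum_congr rfl fun r _ => ?_
    rw [Ld_sub, Ld_sub]; ring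
  have hSnn : ∀ r ∈ Finset.univ (α := E),
      0 ≤ (Ld inc q' r - Ld inc q r) * (φ r (Ld inc q' r) - φ r (Ld inc q r)) := by
    intro r _
    have := mono_term_nonpos (hmono r) (Ld inc q' r) (Ld inc q r)
    nlinarith
  have hS0 : ∑ r : E, (Ld inc q' r - Ld inc q r) * (φ r (Ld inc q' r) - φ r (Ld inc q r)) = 0 :=
    le_antisymm (by rw [hS]; linarith) (Finset.sum_nonneg hSnn)
  intro r
  have := (Finset.sum_eq_zero_iff_of_nonneg hSnn).1 hS0 r (Finset.mem_univ r)
  exact mono_term_eq (hmono r) (by nlinarith [this.symm.le])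

end WardTheory


section Entropy

variable {ρ lam : ι → ℝ} {p y : (Σ i, A i) → ℝ}

lemma sum_inv_lam_sub_zero (hp2 : ∀ i, ∑ α : A i, p ⟨i, α⟩ = ρ i)
    (hy2 : ∀ i, ∑ α : A i, y ⟨i, α⟩ = ρ i) :
    ∑ a : Σ i, A i, (lam a.1)⁻¹ * (p a - y a) = 0 := by
  rw [← Finset.univ_sigma_univ, Finset.sum_sigma]
  apply Finset.sum_eq_zero
  intro i _
  have h : ∑ s : A i, (lam i)⁻¹ * (p ⟨i, s⟩ - y ⟨i, s⟩) = 0 := by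
    rw [← Finset.mul_sum, Finset.sum_sub_distrib, hp2 i, hy2 i, sub_self, mul_zero]
  exact h

lemma ent_nonneg (hlam : ∀ i, 0 < lam i) (hp : p ∈ Dst ρ)
    (hy2 : ∀ i, ∑ α : A i, y ⟨i, α⟩ = ρ i) (hy : ∀ a, 0 < y a) :
    0 ≤ ent lam p y := by
  calc (0:ℝ) = ∑ a : Σ i, A i, (lam a.1)⁻¹ * (p a - y a) :=
        (sum_inv_lam_sub_zero hp.2 hy2).symm
    _ ≤ ent lam p y :=
        Finset.sum_le_sum fun a _ => gibbs_term (hlam a.1) (hp.1 a) (hy a)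

lemma eq_of_ent_zero (hlam : ∀ i, 0 < lam i) (hp : p ∈ Dst ρ) (hy : y ∈ Dst ρ)
    (hys : ∀ a, 0 < p a → 0 < y a) (h : ent lam p y = 0) : y = p := by
  set g : (Σ i, A i) → ℝ := fun a =>
    (lam a.1)⁻¹ * (p a * (Real.log (p a) - Real.log (y a))) - (lam a.1)⁻¹ * (p a - y a)
    with hg
  have hgnn : ∀ a ∈ Finset.univ (α := Σ i, A i), 0 ≤ g a := by
    intro a _
    rcases eq_or_lt_of_le (hp.1 a) with h0 | h0
    · have : g a = (lam a.1)⁻¹ * y a := by rw [hg]; simp only []; rw [← h0]; ring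
      rw [this]
      exact mul_nonneg (inv_pos.2 (hlam a.1)).le (hy.1 a)
    · have := gibbs_term (hlam a.1) (hp.1 a) (hys a h0)
      rw [hg]; simp only []; linarith
  have hgsum : ∑ a : Σ i, A i, g a = 0 := by
    rw [hg]
    simp only []
    rw [Finset.sum_sub_distrib, sum_inv_lam_sub_zero hp.2 hy.2]
    simpa [ent] using h
  have hgz := (Finset.sum_eq_zero_iff_of_nonneg hgnn).1 hgsum
  funext a
  have hga : g a = 0 := hgz a (Finset.mem_univ a)
  have hlne : (lam a.1)⁻¹ ≠ 0 := (inv_pos.2 (hlam a.1)).ne'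
  rcases eq_or_lt_of_le (hp.1 a) with h0 | h0
  · have : g a = (lam a.1)⁻¹ * y a := by rw [hg]; simp only []; rw [← h0]; ring
    rw [this] at hga
    have : y a = 0 := by
      rcases mul_eq_zero.1 hga with h | h
      · exact absurd h hlne
      · exact h
    rw [this, ← h0]
  · have hya := hys a h0
    have : p a * (Real.log (p a) - Real.log (y a)) = p a - y a := by
      rw [hg] at hga
      simp only [] at hga
      rw [sub_eq_zero] at hga
      exact mul_left_cancel₀ hlne hga
    exact gibbs_eq h0 hya this

end Entropy

section Existence

variable {ρ : ι → ℝ} {inc : (Σ i, A i) → Finset E} {φ φ' : E → ℝ → ℝ}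

lemma Dst_compact (ρ : ι → ℝ) : IsCompact (Dst (A := A) ρ) := by
  have hclosed : IsClosed (Dst (A := A) ρ) := by
    have h1 : IsClosed {y : (Σ i, A i) → ℝ | ∀ a, 0 ≤ y a} := by
      have : {y : (Σ i, A i) → ℝ | ∀ a, 0 ≤ y a} = ⋂ a, {y | 0 ≤ y a} := by
        ext y; simp
      rw [this]
      exact isClosed_iInter fun a => isClosed_le continuous_const (continuous_apply a)
    have h2 : IsClosed {y : (Σ i, A i) → ℝ | ∀ i, ∑ α : A i, y ⟨i, α⟩ = ρ i} := by
      have : {y : (Σ i, A i) → ℝ | ∀ i, ∑ α : A i, y ⟨i, α⟩ = ρ i}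
          = ⋂ i, {y | ∑ α : A i, y ⟨i, α⟩ = ρ i} := by ext y; simp
      rw [this]
      exact isClosed_iInter fun i => isClosed_eq
        (continuous_finset_sum _ fun α _ => continuous_apply _) continuous_const
    exact h1.inter h2
  refine IsCompact.of_isClosed_subset
    (isCompact_univ_pi fun a : Σ i, A i => isCompact_Icc (a := (0:ℝ)) (b := ρ a.1))
    hclosed ?_
  intro y hy
  rw [Set.mem_univ_pi]
  intro a
  refine ⟨hy.1 a, ?_⟩
  obtain ⟨i, α⟩ := a
  calc y ⟨i, α⟩ ≤ ∑ β : A i, y ⟨i, β⟩ :=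
        Finset.single_le_sum (fun β _ => hy.1 ⟨i, β⟩) (Finset.mem_univ α)
    _ = ρ i := hy.2 i

lemma Dst_nonempty (hρ : ∀ i, 0 < ρ i) (hA : ∀ i, Nonempty (A i)) :
    (Dst (A := A) ρ).Nonempty := by
  refine ⟨fun a => ρ a.1 / Fintype.card (A a.1), fun a => ?_, fun i => ?_⟩
  · have : (0:ℝ) < Fintype.card (A a.1) := by
      have := Fintype.card_pos_iff.2 (hA a.1)
      exact_mod_cast this
    exact (div_pos (hρ a.1) this).le
  · have hcard : (Fintype.card (A i) : ℝ) ≠ 0 := by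
      have := Fintype.card_pos_iff.2 (hA i)
      exact_mod_cast this.ne'
    have h : (∑ _α : A i, ρ i / (Fintype.card (A i) : ℝ)) = ρ i := by
      rw [Finset.sum_const, Finset.card_univ, nsmul_eq_mul]
      field_simp
    exact h


lemma Ld_add_smul (inc : (Σ i, A i) → Finset E) (u v : (Σ i, A i) → ℝ) (c : ℝ) (r : E) :
    Ld inc (fun a => u a + c * v a) r = Ld inc u r + c * Ld inc v r := by
  unfold Ld
  rw [Finset.mul_sum, ← Finset.sum_add_distrib]
  refine Finset.sum_congr rfl fun a _ => ?_
  by_cases h : r ∈ inc a <;> simp [h]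

/-- Existence of a Wardrop equilibrium via the Beckmann potential. -/
lemma exists_Wd (hρ : ∀ i, 0 < ρ i) (hA : ∀ i, Nonempty (A i))
    (hφd : ∀ r w, HasDerivAt (φ r) (φ' r w) w) :
    ∃ q, Wd ρ inc φ q := by
  classical
  have hφc : ∀ r, Continuous (φ r) :=
    fun r => (Differentiable.continuous fun w => (hφd r w).differentiableAt)
  set F : E → ℝ → ℝ := fun r w => ∫ s in (0:ℝ)..w, φ r s with hFdef
  have hF : ∀ r w, HasDerivAt (F r) (φ r w) w := fun r w =>
    intervalIntegral.integral_hasDerivAt_right ((hφc r).intervalIntegrable 0 w)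
      ((hφc r).stronglyMeasurableAtFilter _ _) (hφc r).continuousAt
  have hFc : ∀ r, Continuous (F r) :=
    fun r => Differentiable.continuous fun w => (hF r w).differentiableAt
  set V : ((Σ i, A i) → ℝ) → ℝ := fun y => ∑ r : E, F r (Ld inc y r) with hVdef
  have hVc : Continuous V :=
    continuous_finset_sum _ fun r _ => (hFc r).comp (Ld_continuous inc r)
  obtain ⟨q, hqD, hqmin⟩ := (Dst_compact ρ).exists_isMinOn (Dst_nonempty hρ hA)
    hVc.continuousOn
  refine ⟨q, hqD, ?_⟩
  intro i α β hα
  by_cases hab : α = β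
  · rw [hab]
  -- perturbation direction
  set d : (Σ i, A i) → ℝ := fun a =>
    (if a = (⟨i, β⟩ : Σ i, A i) then 1 else 0) - (if a = (⟨i, α⟩ : Σ i, A i) then 1 else 0)
    with hd
  have hne : (⟨i, β⟩ : Σ i, A i) ≠ ⟨i, α⟩ := by
    simp [Sigma.mk.inj_iff]; exact fun h => hab (by cases h; rfl)
  -- the perturbed points remain feasible
  have hmem : ∀ ε ∈ Set.Ioc 0 (q ⟨i, α⟩), (fun a => q a + ε * d a) ∈ Dst ρ := by
    intro ε hε
    constructor
    · intro a
      show 0 ≤ q a + ε * d a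
      have hda : d a = (if a = (⟨i, β⟩ : Σ i, A i) then 1 else 0)
          - (if a = (⟨i, α⟩ : Σ i, A i) then 1 else 0) := rfl
      by_cases h1 : a = (⟨i, β⟩ : Σ i, A i)
      · have hd1 : d a = 1 := by
          rw [hda, if_pos h1, if_neg (by rw [h1]; exact hne), sub_zero]
        rw [hd1]
        nlinarith [hqD.1 a, hε.1]
      · by_cases h2 : a = (⟨i, α⟩ : Σ i, A i)
        · have hd2 : d a = -1 := by rw [hda, if_neg h1, if_pos h2]; ring
          rw [hd2, h2]
          linarith [hε.2]
        · have hd3 : d a = 0 := by rw [hda, if_neg h1, if_neg h2, sub_zero]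
          rw [hd3, mul_zero, add_zero]
          exact hqD.1 a
    · intro i'
      have hdsum : ∑ γ : A i', d ⟨i', γ⟩ = 0 := by
        rw [hd]
        simp only []
        rw [Finset.sum_sub_distrib]
        by_cases hii : i' = i
        · subst hii
          have h1 : ∑ γ : A i', (if (⟨i', γ⟩ : Σ i, A i) = ⟨i', β⟩ then (1:ℝ) else 0) = 1 := by
            have : ∀ γ : A i', ((⟨i', γ⟩ : Σ i, A i) = ⟨i', β⟩) ↔ γ = β := by
              intro γ; simp [Sigma.mk.inj_iff]
            simp only [this]
            rw [Finset.sum_ite_eq' Finset.univ β (fun _ => (1:ℝ))]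
            simp
          have h2 : ∑ γ : A i', (if (⟨i', γ⟩ : Σ i, A i) = ⟨i', α⟩ then (1:ℝ) else 0) = 1 := by
            have : ∀ γ : A i', ((⟨i', γ⟩ : Σ i, A i) = ⟨i', α⟩) ↔ γ = α := by
              intro γ; simp [Sigma.mk.inj_iff]
            simp only [this]
            rw [Finset.sum_ite_eq' Finset.univ α (fun _ => (1:ℝ))]
            simp
          rw [h1, h2, sub_self]
        · have h1 : ∀ γ : A i', ((⟨i', γ⟩ : Σ i, A i) = ⟨i, β⟩) = False := by
            intro γ; simp [Sigma.mk.inj_iff]; exact fun h => absurd h hii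
          have h2 : ∀ γ : A i', ((⟨i', γ⟩ : Σ i, A i) = ⟨i, α⟩) = False := by
            intro γ; simp [Sigma.mk.inj_iff]; exact fun h => absurd h hii
          simp [h1, h2]
      rw [Finset.sum_add_distrib, hqD.2 i', ← Finset.mul_sum, hdsum, mul_zero, add_zero]
  -- derivative of the potential along the segment
  have hLd' : ∀ ε : ℝ, ∀ r, Ld inc (fun a => q a + ε * d a) r = Ld inc q r + ε * Ld inc d r :=
    fun ε r => Ld_add_smul inc q d ε r
  set g : ℝ → ℝ := fun ε => ∑ r : E, F r (Ld inc q r + ε * Ld inc d r) with hgdef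
  have hgV : ∀ ε, g ε = V (fun a => q a + ε * d a) := by
    intro ε
    rw [hgdef, hVdef]
    exact Finset.sum_congr rfl fun r _ => by rw [hLd' ε r]
  have hgd : HasDerivAt g (∑ r : E, φ r (Ld inc q r) * Ld inc d r) 0 := by
    apply HasDerivAt.fun_sum
    intro r _
    have hinner : HasDerivAt (fun ε : ℝ => Ld inc q r + ε * Ld inc d r) (Ld inc d r) 0 := by
      simpa using (hasDerivAt_mul_const (Ld inc d r) (x := (0:ℝ))).const_add (Ld inc q r)
    have houter := hF r (Ld inc q r + 0 * Ld inc d r)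
    have := houter.comp 0 hinner
    simpa [Function.comp_def] using this
  -- the derivative equals the cost difference
  have hLdd : ∀ r, Ld inc d r = (if r ∈ inc (⟨i, β⟩ : Σ i, A i) then (1:ℝ) else 0)
      - (if r ∈ inc (⟨i, α⟩ : Σ i, A i) then (1:ℝ) else 0) := by
    intro r
    unfold Ld
    rw [hd]
    have : ∀ a : Σ i, A i, (if r ∈ inc a then
        ((if a = (⟨i, β⟩ : Σ i, A i) then (1:ℝ) else 0) - if a = (⟨i, α⟩ : Σ i, A i) then 1 else 0) else 0)
        = (if a = (⟨i, β⟩ : Σ i, A i) then (if r ∈ inc a then (1:ℝ) else 0) else 0)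
          - (if a = (⟨i, α⟩ : Σ i, A i) then (if r ∈ inc a then (1:ℝ) else 0) else 0) := by
      intro a
      have hba : ¬((⟨i, β⟩ : Σ i, A i) = ⟨i, α⟩) := hne
      by_cases h1 : a = (⟨i, β⟩ : Σ i, A i) <;> by_cases h2 : a = (⟨i, α⟩ : Σ i, A i)
      · exact absurd (h1.symm.trans h2) hne
      all_goals
        have hba2 : ¬β = α := fun h => hab h.symm
        by_cases h3 : r ∈ inc a <;>
          by_cases h4 : r ∈ inc (⟨i, α⟩ : Σ i, A i) <;>
            simp [h1, h2, h3, h4, hab, hba2]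
    rw [Finset.sum_congr rfl fun a _ => this a, Finset.sum_sub_distrib]
    congr 1
    · rw [Finset.sum_ite_eq' Finset.univ (⟨i, β⟩ : Σ i, A i)
        (fun a => if r ∈ inc a then (1:ℝ) else 0)]
      simp
    · rw [Finset.sum_ite_eq' Finset.univ (⟨i, α⟩ : Σ i, A i)
        (fun a => if r ∈ inc a then (1:ℝ) else 0)]
      simp
  have hderiv_eq : ∑ r : E, φ r (Ld inc q r) * Ld inc d r
      = cst inc φ q ⟨i, β⟩ - cst inc φ q ⟨i, α⟩ := by
    rw [Finset.sum_congr rfl fun r _ => by rw [hLdd r, mul_sub]]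
    rw [Finset.sum_sub_distrib]
    unfold cst
    congr 1
    · calc (∑ x : E, φ x (Ld inc q x) * if x ∈ inc (⟨i, β⟩ : Σ i, A i) then (1:ℝ) else 0)
          = ∑ x : E, (if x ∈ inc (⟨i, β⟩ : Σ i, A i) then φ x (Ld inc q x) else 0) :=
            Finset.sum_congr rfl fun x _ => by
              by_cases h : x ∈ inc (⟨i, β⟩ : Σ i, A i) <;> simp [h]
        _ = _ := by rw [Finset.sum_ite_mem, Finset.univ_inter]
    · calc (∑ x : E, φ x (Ld inc q x) * if x ∈ inc (⟨i, α⟩ : Σ i, A i) then (1:ℝ) else 0)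
          = ∑ x : E, (if x ∈ inc (⟨i, α⟩ : Σ i, A i) then φ x (Ld inc q x) else 0) :=
            Finset.sum_congr rfl fun x _ => by
              by_cases h : x ∈ inc (⟨i, α⟩ : Σ i, A i) <;> simp [h]
        _ = _ := by rw [Finset.sum_ite_mem, Finset.univ_inter]
  -- minimality gives nonnegative right derivative
  have hminseg : ∀ ε ∈ Set.Ioc 0 (q ⟨i, α⟩), g 0 ≤ g ε := by
    intro ε hε
    rw [hgV, hgV]
    have h0 : (fun a => q a + (0:ℝ) * d a) = q := by funext a; simp
    rw [h0]
    exact hqmin (hmem ε hε)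
  have := deriv_nonneg_of_right_min hα hgd hminseg
  rw [hderiv_eq] at this
  linarith

end Existence

end Stmt13Aux

open Stmt13Aux in
/-- Every interior solution of the rate-adjusted replicator dynamics
in a congestion model with strictly increasing C¹ latencies converges, as
`t → ∞`, to a single Wardrop equilibrium; if the network is irreducible this is
the unique Wardrop equilibrium. -/
theorem stmt13 {ι : Type*} [Fintype ι] {A : ι → Type*} [∀ i, Fintype (A i)]
    {E : Type*} [Fintype E] [DecidableEq E]
    (ρ lam : ι → ℝ) (hρ : ∀ i, 0 < ρ i) (hlam : ∀ i, 0 < lam i)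
    (inc : (Σ i, A i) → Finset E)
    (φ φ' : E → ℝ → ℝ)
    (hφ : ∀ r w, HasDerivAt (φ r) (φ' r w) w) (hφ' : ∀ r w, 0 < φ' r w)
    (load : ((Σ i, A i) → ℝ) → E → ℝ)
    (hload : ∀ x r, load x r = ∑ a : Σ i, A i, (if r ∈ inc a then x a else 0))
    (ω : (Σ i, A i) → ((Σ i, A i) → ℝ) → ℝ)
    (hω : ∀ a x, ω a x = ∑ r ∈ inc a, φ r (load x r))
    (wbar : ι → ((Σ i, A i) → ℝ) → ℝ)
    (hwbar : ∀ i x, wbar i x = (ρ i)⁻¹ * ∑ α : A i, x ⟨i, α⟩ * ω ⟨i, α⟩ x)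
    (Δset : Set ((Σ i, A i) → ℝ))
    (hΔ : Δset = {x | (∀ a, 0 ≤ x a) ∧ ∀ i, ∑ α : A i, x ⟨i, α⟩ = ρ i})
    (IsWardrop : ((Σ i, A i) → ℝ) → Prop)
    (hWdef : ∀ x, IsWardrop x ↔ x ∈ Δset ∧
      ∀ i, ∀ α β : A i, 0 < x ⟨i, α⟩ → ω ⟨i, α⟩ x ≤ ω ⟨i, β⟩ x)
    (x : ℝ → (Σ i, A i) → ℝ)
    (hode : ∀ (a : Σ i, A i) (t : ℝ), 0 ≤ t →
      HasDerivAt (fun s => x s a) (lam a.1 * x t a * (wbar a.1 (x t) - ω a (x t))) t)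
    (hint : ∀ t, 0 ≤ t → ((∀ a, 0 < x t a) ∧ ∀ i, ∑ α : A i, x t ⟨i, α⟩ = ρ i)) :
    ∃ q, IsWardrop q ∧ Filter.Tendsto x Filter.atTop (nhds q) ∧
      ((∀ z : (Σ i, A i) → ℝ, (∀ i, ∑ α : A i, z ⟨i, α⟩ = 0) →
          (∀ r, ∑ a : Σ i, A i, (if r ∈ inc a then z a else 0) = 0) → z = 0) →
        ∀ q', IsWardrop q' → q' = q) := by
  classical
  have hA : ∀ i, Nonempty (A i) := by
    intro i
    by_contra h
    rw [not_nonempty_iff] at h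
    have h2 := (hint 0 le_rfl).2 i
    rw [Finset.univ_eq_empty, Finset.sum_empty] at h2
    exact absurd h2.symm (ne_of_gt (hρ i))
  have hΔD : Δset = Dst ρ := hΔ
  have hLd : ∀ y r, load y r = Ld inc y r := fun y r => hload y r
  have hcst : ∀ a y, ω a y = cst inc φ y a := by
    intro a y
    rw [hω]
    exact Finset.sum_congr rfl fun r _ => by rw [hLd]
  have hW' : ∀ y, IsWardrop y ↔ Wd ρ inc φ y := by
    intro y
    rw [hWdef, hΔD]
    unfold Wd
    constructor
    · rintro ⟨h1, h2⟩
      exact ⟨h1, fun i α β h => by rw [← hcst, ← hcst]; exact h2 i α β h⟩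
    · rintro ⟨h1, h2⟩
      exact ⟨h1, fun i α β h => by rw [hcst, hcst]; exact h2 i α β h⟩
  have hmono : ∀ r, StrictMono (φ r) := fun r =>
    strictMono_of_deriv_pos fun w => by rw [(hφ r w).deriv]; exact hφ' r w
  have hφc : ∀ r, Continuous (φ r) :=
    fun r => Differentiable.continuous fun w => (hφ r w).differentiableAt
  have hxD : ∀ t, 0 ≤ t → x t ∈ Dst ρ :=
    fun t ht => ⟨fun a => ((hint t ht).1 a).le, (hint t ht).2⟩
  -- derivative of the entropy along the trajectory
  have hkey : ∀ p : (Σ i, A i) → ℝ, (∀ i, ∑ α : A i, p ⟨i, α⟩ = ρ i) → ∀ t, 0 ≤ t →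
      HasDerivAt (fun s => ent lam p (x s)) (GF inc φ p (x t)) t := by
    intro p hp t ht
    have hterm : ∀ a : Σ i, A i,
        HasDerivAt (fun s => (lam a.1)⁻¹ * (p a * (Real.log (p a) - Real.log (x s a))))
          ((lam a.1)⁻¹ * (p a *
            -((lam a.1 * x t a * (wbar a.1 (x t) - ω a (x t))) / (x t a)))) t := by
      intro a
      have h1 := (hode a t ht).log ((hint t ht).1 a).ne'
      exact ((h1.const_sub (Real.log (p a))).const_mul (p a)).const_mul (lam a.1)⁻¹
    have hval : ∑ a : Σ i, A i, (lam a.1)⁻¹ * (p a *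
          -((lam a.1 * x t a * (wbar a.1 (x t) - ω a (x t))) / (x t a)))
        = GF inc φ p (x t) := by
      have h1 : ∀ a : Σ i, A i, (lam a.1)⁻¹ * (p a *
            -((lam a.1 * x t a * (wbar a.1 (x t) - ω a (x t))) / (x t a)))
          = p a * ω a (x t) - p a * wbar a.1 (x t) := by
        intro a
        have hx := (hint t ht).1 a
        have hl := hlam a.1
        field_simp
        ring
      rw [Finset.sum_congr rfl fun a _ => h1 a, Finset.sum_sub_distrib]
      have h2 : ∑ a : Σ i, A i, p a * wbar a.1 (x t)
          = ∑ a : Σ i, A i, x t a * ω a (x t) := by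
        rw [← Finset.univ_sigma_univ, Finset.sum_sigma, Finset.sum_sigma]
        refine Finset.sum_congr rfl fun i _ => ?_
        have hw : ρ i * wbar i (x t) = ∑ α : A i, x t ⟨i, α⟩ * ω ⟨i, α⟩ (x t) := by
          rw [hwbar, ← mul_assoc, mul_inv_cancel₀ (hρ i).ne', one_mul]
        have h3 : ∑ α : A i, p ⟨i, α⟩ * wbar i (x t) = ρ i * wbar i (x t) := by
          rw [← Finset.sum_mul, hp i]
        exact h3.trans hw
      rw [h2]
      unfold GF
      rw [← Finset.sum_sub_distrib]
      refine Finset.sum_congr rfl fun a _ => ?_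
      rw [hcst]
      ring
    have hsum : HasDerivAt
        (fun s => ∑ a : Σ i, A i, (lam a.1)⁻¹ * (p a * (Real.log (p a) - Real.log (x s a))))
        (∑ a : Σ i, A i, (lam a.1)⁻¹ * (p a *
          -((lam a.1 * x t a * (wbar a.1 (x t) - ω a (x t))) / (x t a)))) t :=
      HasDerivAt.fun_sum fun a _ => hterm a
    exact hval ▸ hsum
  have hanti : ∀ p, Wd ρ inc φ p →
      AntitoneOn (fun s => ent lam p (x s)) (Set.Ici 0) := by
    intro p hp
    apply antitoneOn_of_deriv_nonpos (convex_Ici 0)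
    · exact fun t ht => (hkey p hp.1.2 t ht).continuousAt.continuousWithinAt
    · intro t ht
      rw [interior_Ici] at ht
      exact (hkey p hp.1.2 t ht.le).differentiableAt.differentiableWithinAt
    · intro t ht
      rw [interior_Ici] at ht
      rw [(hkey p hp.1.2 t ht.le).deriv]
      exact GF_nonpos hA hmono hp (hxD t ht.le)
  have hge0 : ∀ p, p ∈ Dst ρ → ∀ t, 0 ≤ t → 0 ≤ ent lam p (x t) :=
    fun p hp t ht => ent_nonneg hlam hp (hxD t ht).2 (hint t ht).1
  -- the derivative functional recurrently comes close to zero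
  have hfreq : ∀ p, Wd ρ inc φ p → ∀ ε : ℝ, 0 < ε → ∀ N : ℝ, 0 ≤ N →
      ∃ t, N ≤ t ∧ -ε < GF inc φ p (x t) := by
    intro p hp ε hε N hN
    by_contra hcon
    push_neg at hcon
    set K : ℝ → ℝ := fun s => ent lam p (x s) + ε * s with hK
    have hKd : ∀ t, N ≤ t → HasDerivAt K (GF inc φ p (x t) + ε) t := by
      intro t ht
      have h2 : HasDerivAt (fun s : ℝ => ε * s) ε t := by
        simpa using (hasDerivAt_id t).const_mul ε
      exact (hkey p hp.1.2 t (hN.trans ht)).add h2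
    have hKanti : AntitoneOn K (Set.Ici N) := by
      apply antitoneOn_of_deriv_nonpos (convex_Ici N)
      · exact fun t ht => (hKd t ht).continuousAt.continuousWithinAt
      · intro t ht
        rw [interior_Ici] at ht
        exact (hKd t ht.le).differentiableAt.differentiableWithinAt
      · intro t ht
        rw [interior_Ici] at ht
        rw [(hKd t ht.le).deriv]
        linarith [hcon t ht.le]
    set T : ℝ := N + (ent lam p (x N) + 1) / ε with hT
    have hTN : N ≤ T := by
      have h0 := hge0 p hp.1 N hN
      have h1 : 0 ≤ (ent lam p (x N) + 1) / ε := by positivity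
      rw [hT]
      linarith
    have hmt' := hKanti (Set.mem_Ici.2 (le_refl N)) (Set.mem_Ici.2 hTN) hTN
    have hmt : ent lam p (x T) + ε * T ≤ ent lam p (x N) + ε * N := hmt'
    have hentT := hge0 p hp.1 T (hN.trans hTN)
    have hεT : ε * T = ε * N + (ent lam p (x N) + 1) := by
      rw [hT]
      field_simp
    linarith
  -- existence of a Wardrop point
  obtain ⟨q₀, hq₀⟩ := exists_Wd (inc := inc) (φ' := φ') hρ hA hφ
  -- extract a sequence of times with small derivative functional
  have hseq : ∀ n : ℕ, ∃ t : ℝ, (n : ℝ) ≤ t ∧ -(1 / ((n : ℝ) + 1)) < GF inc φ q₀ (x t) :=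
    fun n => hfreq q₀ hq₀ (1 / ((n : ℝ) + 1)) (by positivity) n (Nat.cast_nonneg n)
  choose ts hts hGts using hseq
  have htsnn : ∀ n, 0 ≤ ts n := fun n => (Nat.cast_nonneg n).trans (hts n)
  obtain ⟨p, hpD, ψ, hψ, hψlim⟩ := (Dst_compact ρ).tendsto_subseq
    (x := fun n => x (ts n)) (fun n => hxD _ (htsnn n))
  have hGFc : Continuous fun y => GF inc φ q₀ y := by
    apply continuous_finset_sum
    intro a _
    apply Continuous.mul
    · exact continuous_const.sub (continuous_apply a)
    · exact continuous_finset_sum _ fun r _ => (hφc r).comp (Ld_continuous inc r)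
  have hGFp : GF inc φ q₀ p = 0 := by
    have hlim2 : Filter.Tendsto (fun k => GF inc φ q₀ (x (ts (ψ k))))
        Filter.atTop (nhds (GF inc φ q₀ p)) := (hGFc.tendsto p).comp hψlim
    have hub : GF inc φ q₀ p ≤ 0 := le_of_tendsto hlim2
      (Filter.Eventually.of_forall fun k => GF_nonpos hA hmono hq₀ (hxD _ (htsnn _)))
    have hl : Filter.Tendsto (fun k : ℕ => -(1 / ((ψ k : ℝ) + 1))) Filter.atTop (nhds 0) := by
      rw [← neg_zero]
      exact (tendsto_one_div_add_atTop_nhds_zero_nat.comp hψ.tendsto_atTop).neg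
    have hlb : 0 ≤ GF inc φ q₀ p :=
      le_of_tendsto_of_tendsto' hl hlim2 fun k => (hGts (ψ k)).le
    linarith
  have hLp : ∀ r, Ld inc p r = Ld inc q₀ r :=
    loads_eq_of_GF_zero hA hmono hq₀ hpD hGFp
  have hpW : Wd ρ inc φ p := Wd_of_loads hA hq₀ hpD hLp
  -- entropy relative to p along subsequences converging to suitable points
  have htendent : ∀ (z : (Σ i, A i) → ℝ) (v : ℕ → ((Σ i, A i) → ℝ)),
      Filter.Tendsto v Filter.atTop (nhds z) → (∀ a, 0 < p a → 0 < z a) →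
      Filter.Tendsto (fun k => ent lam p (v k)) Filter.atTop (nhds (ent lam p z)) := by
    intro z v hv hz
    unfold ent
    apply tendsto_finset_sum
    intro a _
    rcases eq_or_lt_of_le (hpD.1 a) with h0 | h0
    · simp [← h0]
    · apply Filter.Tendsto.const_mul
      apply Filter.Tendsto.const_mul
      exact Filter.Tendsto.sub tendsto_const_nhds
        (((Real.continuousAt_log (hz a h0).ne').tendsto).comp
          (((continuous_apply a).tendsto z).comp hv))
  have hentpp : ent lam p p = 0 := by
    unfold ent
    apply Finset.sum_eq_zero
    intro a _
    simp
  have hentlim : Filter.Tendsto (fun k => ent lam p (x (ts (ψ k)))) Filter.atTop (nhds 0) := by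
    have := htendent p (fun k => x (ts (ψ k))) hψlim (fun a h => h)
    rwa [hentpp] at this
  -- entropy tends to zero along the whole trajectory
  have hent0 : Filter.Tendsto (fun t => ent lam p (x t)) Filter.atTop (nhds 0) := by
    rw [Metric.tendsto_atTop]
    intro ε hε
    obtain ⟨k, hk⟩ := Metric.tendsto_atTop.1 hentlim ε hε
    refine ⟨ts (ψ k), fun t ht => ?_⟩
    have htnn : (0:ℝ) ≤ t := (htsnn (ψ k)).trans ht
    have h1 : 0 ≤ ent lam p (x t) := hge0 p hpW.1 t htnn
    have h2 : ent lam p (x t) ≤ ent lam p (x (ts (ψ k))) :=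
      hanti p hpW (Set.mem_Ici.2 (htsnn (ψ k))) (Set.mem_Ici.2 htnn) ht
    have h3 := hk k le_rfl
    rw [Real.dist_eq, sub_zero, abs_of_nonneg (hge0 p hpW.1 _ (htsnn (ψ k)))] at h3
    rw [Real.dist_eq, sub_zero, abs_of_nonneg h1]
    linarith
  -- convergence of the trajectory to p
  have hconv : Filter.Tendsto x Filter.atTop (nhds p) := by
    rw [Metric.tendsto_atTop]
    by_contra hcon
    push_neg at hcon
    obtain ⟨ε, hε, hfar⟩ := hcon
    have hsel : ∀ n : ℕ, ∃ t : ℝ, (n : ℝ) ≤ t ∧ ε ≤ dist (x t) p := fun n => hfar n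
    choose ss hss hssfar using hsel
    have hssnn : ∀ n, 0 ≤ ss n := fun n => (Nat.cast_nonneg n).trans (hss n)
    obtain ⟨y, hyD, θ, hθ, hθlim⟩ := (Dst_compact ρ).tendsto_subseq
      (x := fun n => x (ss n)) (fun n => hxD _ (hssnn n))
    have hyfar : ε ≤ dist y p := by
      have hd : Filter.Tendsto (fun k => dist (x (ss (θ k))) p) Filter.atTop
          (nhds (dist y p)) :=
        ((continuous_id.dist continuous_const).tendsto y).comp hθlim
      exact le_of_tendsto_of_tendsto' tendsto_const_nhds hd fun k => hssfar (θ k)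
    have hssat : Filter.Tendsto (fun k : ℕ => ss (θ k)) Filter.atTop Filter.atTop := by
      apply tendsto_atTop_mono (fun k : ℕ => le_trans (Nat.cast_le.2 hθ.le_apply) (hss (θ k)))
      exact tendsto_natCast_atTop_atTop
    have hents : Filter.Tendsto (fun k => ent lam p (x (ss (θ k)))) Filter.atTop (nhds 0) :=
      hent0.comp hssat
    by_cases hsupp : ∀ a, 0 < p a → 0 < y a
    · have hlim2 := htendent y (fun k => x (ss (θ k))) hθlim hsupp
      have hyent : ent lam p y = 0 := tendsto_nhds_unique hlim2 hents
      have hyp := eq_of_ent_zero hlam hpW.1 hyD hsupp hyent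
      rw [hyp] at hyfar
      simp at hyfar
      linarith
    · push_neg at hsupp
      obtain ⟨a, hpa, hya⟩ := hsupp
      have hya0 : y a = 0 := le_antisymm hya (hyD.1 a)
      set u : ℕ → ℝ := fun k => x (ss (θ k)) a with hu
      have hupos : ∀ k, 0 < u k := fun k => (hint _ (hssnn _)).1 a
      have hulim : Filter.Tendsto u Filter.atTop (nhds 0) := by
        have := ((continuous_apply a).tendsto y).comp hθlim
        rwa [hya0] at this
      have hlog : Filter.Tendsto (fun k => Real.log (u k)) Filter.atTop Filter.atBot := by
        apply Real.tendsto_log_nhdsGT_zero.comp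
        rw [tendsto_nhdsWithin_iff]
        exact ⟨hulim, Filter.Eventually.of_forall fun k => hupos k⟩
      have hterm : Filter.Tendsto (fun k => (lam a.1)⁻¹ * (p a * (Real.log (p a) - Real.log (u k)))
          - (lam a.1)⁻¹ * (p a - u k)) Filter.atTop Filter.atTop := by
        have h1 : Filter.Tendsto (fun k => ((lam a.1)⁻¹ * p a) * (-(Real.log (u k))))
            Filter.atTop Filter.atTop := by
          apply Filter.Tendsto.const_mul_atTop
            (mul_pos (inv_pos.2 (hlam a.1)) hpa)
          exact tendsto_neg_atBot_atTop.comp hlog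
        have h2 : Filter.Tendsto (fun k => (lam a.1)⁻¹ * (p a * Real.log (p a))
            - (lam a.1)⁻¹ * (p a - u k)) Filter.atTop
            (nhds ((lam a.1)⁻¹ * (p a * Real.log (p a)) - (lam a.1)⁻¹ * (p a - 0))) := by
          apply Filter.Tendsto.sub tendsto_const_nhds
          exact Filter.Tendsto.const_mul _ (Filter.Tendsto.sub tendsto_const_nhds hulim)
        have h3 := h1.atTop_add h2
        apply h3.congr
        intro k
        ring
      have hboundent : ∀ k, (lam a.1)⁻¹ * (p a * (Real.log (p a) - Real.log (u k)))
          - (lam a.1)⁻¹ * (p a - u k) ≤ ent lam p (x (ss (θ k))) := by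
        intro k
        have hsub := sum_inv_lam_sub_zero (lam := lam) (p := p) (y := x (ss (θ k)))
          hpW.1.2 (hxD _ (hssnn (θ k))).2
        have hsum : ent lam p (x (ss (θ k)))
            = ∑ b : Σ i, A i, ((lam b.1)⁻¹ * (p b * (Real.log (p b) - Real.log (x (ss (θ k)) b)))
              - (lam b.1)⁻¹ * (p b - x (ss (θ k)) b)) := by
          rw [Finset.sum_sub_distrib, hsub, sub_zero]
          rfl
        rw [hsum]
        apply Finset.single_le_sum (f := fun b : Σ i, A i =>
          (lam b.1)⁻¹ * (p b * (Real.log (p b) - Real.log (x (ss (θ k)) b)))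
            - (lam b.1)⁻¹ * (p b - x (ss (θ k)) b)) ?_ (Finset.mem_univ a)
        intro b _
        have := gibbs_term (hlam b.1) (hpW.1.1 b) ((hint _ (hssnn (θ k))).1 b)
        linarith
      have hbig := hterm.eventually_ge_atTop 1
      have hsmall : ∀ᶠ k in Filter.atTop, ent lam p (x (ss (θ k))) < 1 :=
        hents.eventually_lt_const zero_lt_one
      obtain ⟨k, hk1, hk2⟩ := (hbig.and hsmall).exists
      have := hboundent k
      linarith
  -- assemble
  refine ⟨p, (hW' p).2 hpW, hconv, ?_⟩
  intro hirr q' hq'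
  have hq'W : Wd ρ inc φ q' := (hW' q').1 hq'
  have hLL := loads_eq_of_Wd hA hmono hpW hq'W
  have hz := hirr (fun a => q' a - p a) ?_ ?_
  · funext a
    have := congrFun hz a
    simpa [sub_eq_zero] using this
  · intro i
    have h : ∑ α : A i, (q' ⟨i, α⟩ - p ⟨i, α⟩) = 0 := by
      rw [Finset.sum_sub_distrib, hq'W.1.2 i, hpW.1.2 i, sub_self]
    exact h
  · intro r
    have h := Ld_sub inc q' p r
    have h2 : Ld inc (fun a => q' a - p a) r = 0 := by
      rw [h, hLL r, sub_self]
    exact h2
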